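/- For every initial condition x₀ : J → ℝ and every T > 0, the truncated tree model admits a solution on [0,T] with initial condition x₀. -/

import Mathlib

def offspring {J : Type*} [Fintype J] [DecidableEq J] (root : J) (parent : J → J)
    (j : J) : Finset J :=
  Finset.univ.filter fun k => k ≠ root ∧ parent k = j

/-- A solution of the truncated tree model on `[0,T]`:
`X_j' = α (c_j X_{\bar j}² − ∑_{k ∈ O_j} c_k X_j X_k)
      − β (d_{\bar j} X_{\bar j} X_j − ∑_{k ∈ O_j} d_j X_k²)`. -/
def IsTreeSolution {J : Type*} [Fintype J] [DecidableEq J] (root : J) (parent : J → J)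
    (α β : ℝ) (c d : J → ℝ) (T : ℝ) (X : ℝ → J → ℝ) : Prop :=
  ∀ j : J, ∀ t ∈ Set.Icc (0 : ℝ) T,
    HasDerivWithinAt (fun u => X u j)
      (α * (c j * (X t (parent j)) ^ 2
          - ∑ k ∈ offspring root parent j, c k * X t j * X t k)
        - β * (d (parent j) * X t (parent j) * X t j
          - ∑ k ∈ offspring root parent j, d j * (X t k) ^ 2))
      (Set.Icc (0 : ℝ) T) t

section aux
variable {J : Type*} [Fintype J] [DecidableEq J] (root : J) (parent : J → J)
  (α β : ℝ) (c d : J → ℝ)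

/-- The quadratic vector field of the truncated tree model. -/
def Fvec (x : J → ℝ) : J → ℝ := fun j =>
  α * (c j * (x (parent j)) ^ 2
      - ∑ k ∈ offspring root parent j, c k * x j * x k)
    - β * (d (parent j) * x (parent j) * x j
      - ∑ k ∈ offspring root parent j, d j * (x k) ^ 2)

lemma sum_offspring (g : J → J → ℝ) :
    ∑ j, ∑ k ∈ offspring root parent j, g j k
      = ∑ k ∈ Finset.univ.filter (fun k => k ≠ root), g (parent k) k := by
  unfold offspring
  simp_rw [Finset.sum_filter]
  rw [Finset.sum_comm]
  refine Finset.sum_congr rfl fun k _ => ?_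
  by_cases hk : k = root
  · subst hk
    simp
  · simp only [ne_eq, hk, not_false_eq_true, true_and, if_true]
    rw [Finset.sum_ite_eq Finset.univ (parent k) (fun j => g j k)]
    simp

lemma sum_mul_Fvec (hc_root : c root = 0) (hd_root : d root = 0)
    (hparent_root : parent root = root) (x : J → ℝ) :
    ∑ j, x j * Fvec root parent α β c d x j = 0 := by
  have expand : ∀ j, x j * Fvec root parent α β c d x j
      = α * (c j * x (parent j) ^ 2 * x j)
        - α * (∑ k ∈ offspring root parent j, c k * x j ^ 2 * x k)
        - β * (d (parent j) * x (parent j) * x j ^ 2)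
        + β * (∑ k ∈ offspring root parent j, d j * x k ^ 2 * x j) := by
    intro j
    have h2 : x j * ∑ k ∈ offspring root parent j, c k * x j * x k
        = ∑ k ∈ offspring root parent j, c k * x j ^ 2 * x k := by
      rw [Finset.mul_sum]; exact Finset.sum_congr rfl fun k _ => by ring
    have h4 : x j * ∑ k ∈ offspring root parent j, d j * x k ^ 2
        = ∑ k ∈ offspring root parent j, d j * x k ^ 2 * x j := by
      rw [Finset.mul_sum]; exact Finset.sum_congr rfl fun k _ => by ring
    simp only [Fvec]
    linear_combination (-α) * h2 + β * h4
  rw [Finset.sum_congr rfl (fun j _ => expand j)]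
  rw [Finset.sum_add_distrib, Finset.sum_sub_distrib, Finset.sum_sub_distrib,
    ← Finset.mul_sum, ← Finset.mul_sum, ← Finset.mul_sum, ← Finset.mul_sum]
  rw [sum_offspring root parent (fun j k => c k * x j ^ 2 * x k),
    sum_offspring root parent (fun j k => d j * x k ^ 2 * x j)]
  have hA : ∑ j, c j * x (parent j) ^ 2 * x j
      = ∑ k ∈ Finset.univ.filter (fun k => k ≠ root), c k * x (parent k) ^ 2 * x k :=
    (Finset.sum_filter_of_ne (fun j _ hj => by rintro rfl; exact hj (by rw [hc_root]; ring))).symm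
  have hB : ∑ k ∈ Finset.univ.filter (fun k => k ≠ root),
      d (parent k) * x k ^ 2 * x (parent k) = ∑ j, d (parent j) * x (parent j) * x j ^ 2 := by
    rw [Finset.sum_filter_of_ne
      (fun j _ hj => by rintro rfl; exact hj (by rw [hparent_root, hd_root]; ring))]
    exact Finset.sum_congr rfl fun j _ => by ring
  rw [hA, hB]
  ring

lemma Fvec_smul (s : ℝ) (x : J → ℝ) (j : J) :
    Fvec root parent α β c d (s • x) j = s ^ 2 * Fvec root parent α β c d x j := by
  simp only [Fvec, Pi.smul_apply, smul_eq_mul]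
  rw [show ∑ k ∈ offspring root parent j, c k * (s * x j) * (s * x k)
      = s ^ 2 * ∑ k ∈ offspring root parent j, c k * x j * x k by
    rw [Finset.mul_sum]; exact Finset.sum_congr rfl fun k _ => by ring]
  rw [show ∑ k ∈ offspring root parent j, d j * (s * x k) ^ 2
      = s ^ 2 * ∑ k ∈ offspring root parent j, d j * (x k) ^ 2 by
    rw [Finset.mul_sum]; exact Finset.sum_congr rfl fun k _ => by ring]
  ring

lemma contDiff_Fvec : ContDiff ℝ 1 (Fvec root parent α β c d) := by
  rw [contDiff_pi]
  intro j
  have hev : ∀ i : J, ContDiff ℝ 1 (fun x : J → ℝ => x i) := fun i =>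
    (ContinuousLinearMap.proj i : (J → ℝ) →L[ℝ] ℝ).contDiff
  exact (contDiff_const.mul (((contDiff_const.mul ((hev (parent j)).pow 2)).sub
      (ContDiff.sum fun k _ => (contDiff_const.mul (hev j)).mul (hev k))))).sub
    (contDiff_const.mul (((contDiff_const.mul (hev (parent j))).mul (hev j)).sub
      (ContDiff.sum fun k _ => contDiff_const.mul ((hev k).pow 2))))

end aux

/-- The scaling factor of the radial retraction onto the ball of radius `B`. -/
noncomputable def radScale {E : Type*} [NormedAddCommGroup E] (B : ℝ) (x : E) : ℝ :=
  if ‖x‖ ≤ B then 1 else B / ‖x‖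

lemma norm_radScale_smul {E : Type*} [NormedAddCommGroup E] [NormedSpace ℝ E] {B : ℝ}
    (hB : 0 < B) (x : E) : ‖radScale B x • x‖ ≤ B := by
  unfold radScale
  split_ifs with h
  · simpa using h
  · push_neg at h
    have hx : 0 < ‖x‖ := lt_trans hB h
    rw [norm_smul, Real.norm_eq_abs, abs_of_nonneg (div_nonneg hB.le hx.le)]
    rw [div_mul_cancel₀ _ hx.ne']

lemma lipschitz_radial {E : Type*} [NormedAddCommGroup E] [NormedSpace ℝ E] {B : ℝ}
    (hB : 0 < B) : LipschitzWith 2 (fun x : E => radScale B x • x) := by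
  apply LipschitzWith.of_dist_le_mul
  intro x y
  simp only [dist_eq_norm, radScale, NNReal.coe_ofNat]
  have key : ∀ u v : E, ¬ ‖u‖ ≤ B → ‖v‖ ≤ B →
      ‖(B / ‖u‖) • u - v‖ ≤ 2 * ‖u - v‖ := by
    intro u v hu hv
    push_neg at hu
    have hu0 : 0 < ‖u‖ := lt_trans hB hu
    have h1 : ‖(B / ‖u‖) • u - u‖ = ‖u‖ - B := by
      rw [show (B / ‖u‖) • u - u = (B / ‖u‖ - 1) • u by rw [sub_smul, one_smul]]
      rw [norm_smul, Real.norm_eq_abs, abs_of_nonpos (by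
        rw [sub_nonpos, div_le_one hu0]; exact hu.le)]
      field_simp
      ring
    have h2 : ‖(B / ‖u‖) • u - v‖ ≤ ‖(B / ‖u‖) • u - u‖ + ‖u - v‖ := by
      have := norm_sub_le ((B / ‖u‖) • u - u) (v - u)
      rw [sub_sub_sub_cancel_right] at this
      calc ‖(B / ‖u‖) • u - v‖ ≤ ‖(B / ‖u‖) • u - u‖ + ‖v - u‖ := this
        _ = ‖(B / ‖u‖) • u - u‖ + ‖u - v‖ := by rw [norm_sub_rev v u]
    have h3 : ‖u‖ - ‖v‖ ≤ ‖u - v‖ := norm_sub_norm_le u v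
    have h4 : ‖u‖ - B ≤ ‖u‖ - ‖v‖ := by linarith
    calc ‖(B / ‖u‖) • u - v‖ ≤ (‖u‖ - B) + ‖u - v‖ := by rw [← h1]; exact h2
      _ ≤ 2 * ‖u - v‖ := by linarith
  split_ifs with hx hy hy
  · simp only [one_smul]
    have := norm_nonneg (x - y); linarith
  · -- ‖x‖ ≤ B, ‖y‖ > B
    rw [one_smul, norm_sub_rev, norm_sub_rev x y]
    exact key y x hy hx
  · rw [one_smul]
    exact key x y hx hy
  · -- both > B
    push_neg at hx hy
    have hx0 : 0 < ‖x‖ := lt_trans hB hx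
    have hy0 : 0 < ‖y‖ := lt_trans hB hy
    have t1 : ‖(B / ‖x‖) • x - (B / ‖x‖) • y‖ = (B / ‖x‖) * ‖x - y‖ := by
      rw [← smul_sub, norm_smul, Real.norm_eq_abs,
        abs_of_nonneg (div_nonneg hB.le hx0.le)]
    have t2 : ‖(B / ‖x‖) • y - (B / ‖y‖) • y‖ = |B / ‖x‖ - B / ‖y‖| * ‖y‖ := by
      rw [← sub_smul, norm_smul, Real.norm_eq_abs]
    have tri : ‖(B / ‖x‖) • x - (B / ‖y‖) • y‖
        ≤ (B / ‖x‖) * ‖x - y‖ + |B / ‖x‖ - B / ‖y‖| * ‖y‖ := by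
      rw [← t1, ← t2]
      exact norm_sub_le_norm_sub_add_norm_sub _ _ _
    have hBx : B / ‖x‖ ≤ 1 := by rw [div_le_one hx0]; exact hx.le
    have habs : |B / ‖x‖ - B / ‖y‖| * ‖y‖ = (B / ‖x‖) * |‖y‖ - ‖x‖| := by
      rw [show B / ‖x‖ - B / ‖y‖ = B * (‖y‖ - ‖x‖) / (‖x‖ * ‖y‖) by
        field_simp]
      rw [abs_div, abs_mul, abs_of_nonneg hB.le,
        abs_of_nonneg (mul_nonneg hx0.le hy0.le)]
      field_simp
    have hyx : |‖y‖ - ‖x‖| ≤ ‖x - y‖ := by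
      rw [norm_sub_rev]; exact abs_norm_sub_norm_le y x
    have hn : (0:ℝ) ≤ ‖x - y‖ := norm_nonneg _
    have e1 : (B / ‖x‖) * ‖x - y‖ ≤ 1 * ‖x - y‖ := mul_le_mul_of_nonneg_right hBx hn
    have e2 : (B / ‖x‖) * |‖y‖ - ‖x‖| ≤ 1 * ‖x - y‖ := by
      calc (B / ‖x‖) * |‖y‖ - ‖x‖| ≤ 1 * |‖y‖ - ‖x‖| :=
          mul_le_mul_of_nonneg_right hBx (abs_nonneg _)
        _ ≤ 1 * ‖x - y‖ := by rw [one_mul, one_mul]; exact hyx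
    calc ‖(B / ‖x‖) • x - (B / ‖y‖) • y‖
        ≤ (B / ‖x‖) * ‖x - y‖ + |B / ‖x‖ - B / ‖y‖| * ‖y‖ := tri
      _ = (B / ‖x‖) * ‖x - y‖ + (B / ‖x‖) * |‖y‖ - ‖x‖| := by rw [habs]
      _ ≤ 1 * ‖x - y‖ + 1 * ‖x - y‖ := add_le_add e1 e2
      _ = 2 * ‖x - y‖ := by ring

open Set Metric in
/-- for every initial condition `x₀ : J → ℝ` and every `T > 0`, the
truncated tree model admits a solution on `[0,T]` with initial condition `x₀`. -/
theorem tree_solution_exists {J : Type*} [Fintype J] [DecidableEq J]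
    (root : J) (parent : J → J) (gen : J → ℕ)
    (hparent_root : parent root = root) (hgen_root : gen root = 0)
    (hgen : ∀ j, j ≠ root → gen j = gen (parent j) + 1)
    (α β : ℝ) (c d : J → ℝ)
    (hc_root : c root = 0) (hd_root : d root = 0)
    (hconserv : ∀ j, j ≠ root → α * c j - β * d j = 0)
    (T : ℝ) (hT : 0 < T) (x₀ : J → ℝ) :
    ∃ X : ℝ → J → ℝ,
      IsTreeSolution root parent α β c d T X ∧ X 0 = x₀ := by
  classical
  set F : (J → ℝ) → (J → ℝ) := Fvec root parent α β c d with hF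
  set q0 : ℝ := ∑ j, x₀ j * x₀ j with hq0
  have hq0nn : 0 ≤ q0 := Finset.sum_nonneg fun j _ => mul_self_nonneg _
  set B : ℝ := Real.sqrt q0 + 1 with hBdef
  have hB : 0 < B := by positivity
  set φ : (J → ℝ) → (J → ℝ) := fun x => radScale B x • x with hφ
  set G : (J → ℝ) → (J → ℝ) := fun x => F (φ x) with hG
  have hFc : ContDiff ℝ 1 F := contDiff_Fvec root parent α β c d
  -- Lipschitz constant for F on the closed ball of radius B
  have hconv : Convex ℝ (closedBall (0 : J → ℝ) B) := convex_closedBall _ _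
  have hcompact : IsCompact (closedBall (0 : J → ℝ) B) := isCompact_closedBall _ _
  obtain ⟨M, hM⟩ := hcompact.exists_bound_of_continuousOn
    ((hFc.continuous_fderiv one_ne_zero).continuousOn)
  have hM0 : 0 ≤ M := le_trans (norm_nonneg _) (hM 0 (mem_closedBall_self hB.le))
  have hFlip : LipschitzOnWith M.toNNReal F (closedBall (0 : J → ℝ) B) := by
    apply hconv.lipschitzOnWith_of_nnnorm_hasFDerivWithin_le
      (f' := fun x => fderiv ℝ F x)
      (fun x _ => ((hFc.differentiable one_ne_zero) x).hasFDerivAt.hasFDerivWithinAt)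
    intro x hx
    rw [← NNReal.coe_le_coe, coe_nnnorm, Real.coe_toNNReal _ hM0]
    exact hM x hx
  have hφmaps : ∀ s : Set (J → ℝ), MapsTo φ s (closedBall (0 : J → ℝ) B) :=
    fun s x _ => mem_closedBall_zero_iff.2 (norm_radScale_smul hB x)
  have hGlip : ∀ s : Set (J → ℝ), LipschitzOnWith (M.toNNReal * 2) G s := fun s =>
    hFlip.comp ((lipschitz_radial hB).lipschitzOnWith (s := s)) (hφmaps s)
  -- uniform bound for G
  obtain ⟨C0, hC0⟩ := hcompact.exists_bound_of_continuousOn hFc.continuous.continuousOn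
  set C' : ℝ := max C0 0 with hC'
  have hGbound : ∀ x : J → ℝ, ‖G x‖ ≤ C' := fun x =>
    le_trans (hC0 (φ x) (mem_closedBall_zero_iff.2 (norm_radScale_smul hB x)))
      (le_max_left _ _)
  set R : ℝ := C' * T with hR
  have hpl : IsPicardLindelof (fun _ x => G x) (tmin := 0) (tmax := T) ⟨0, ⟨le_refl 0, hT.le⟩⟩
      x₀ (C'.toNNReal * T.toNNReal) 0 C'.toNNReal (M.toNNReal * 2) :=
    { lipschitzOnWith := fun t _ => hGlip _
      continuousOn := fun x _ => continuousOn_const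
      norm_le := fun t _ x _ => by
        rw [Real.coe_toNNReal _ (le_max_right _ _)]; exact hGbound x
      mul_max_le := by
        simp only [NNReal.coe_zero, sub_zero, sub_self, NNReal.coe_mul,
          Real.coe_toNNReal _ (le_max_right _ _), Real.coe_toNNReal _ hT.le, max_eq_left hT.le,
          le_refl] }
  obtain ⟨f, hf0, hf⟩ := hpl.exists_eq_forall_mem_Icc_hasDerivWithinAt₀
  replace hf0 : f 0 = x₀ := hf0
  -- componentwise derivatives
  have hcomp : ∀ t ∈ Icc (0:ℝ) T, ∀ j,
      HasDerivWithinAt (fun u => f u j) (G (f t) j) (Icc (0:ℝ) T) t :=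
    fun t ht j => hasDerivWithinAt_pi.1 (hf t ht) j
  -- energy conservation
  set e : ℝ → ℝ := fun t => ∑ j, f t j * f t j with he
  have hederiv : ∀ t ∈ Icc (0:ℝ) T, HasDerivWithinAt e 0 (Icc (0:ℝ) T) t := by
    intro t ht
    have h1 : HasDerivWithinAt e
        (∑ j, (G (f t) j * f t j + f t j * G (f t) j)) (Icc (0:ℝ) T) t :=
      HasDerivWithinAt.fun_sum fun j _ => (hcomp t ht j).mul (hcomp t ht j)
    have hz : (∑ j, (G (f t) j * f t j + f t j * G (f t) j)) = 0 := by
      have hGj : ∀ j, G (f t) j = radScale B (f t) ^ 2 * F (f t) j := fun j =>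
        Fvec_smul root parent α β c d (radScale B (f t)) (f t) j
      calc (∑ j, (G (f t) j * f t j + f t j * G (f t) j))
          = 2 * radScale B (f t) ^ 2 * ∑ j, f t j * F (f t) j := by
            rw [Finset.mul_sum]
            exact Finset.sum_congr rfl fun j _ => by rw [hGj j]; ring
        _ = 0 := by
            rw [sum_mul_Fvec root parent α β c d hc_root hd_root hparent_root (f t)]
            ring
    exact hz ▸ h1
  have heconst : ∀ t ∈ Icc (0:ℝ) T, e t = e 0 := by
    apply constant_of_has_deriv_right_zero
    · exact fun t ht => (hederiv t ht).continuousWithinAt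
    · intro t ht
      exact (hederiv t (Ico_subset_Icc_self ht)).mono_of_mem_nhdsWithin
        (Icc_mem_nhdsGE_of_mem ht)
  have he0 : e 0 = q0 := by simp only [he, hf0, hq0]
  have hball : ∀ t ∈ Icc (0:ℝ) T, ‖f t‖ ≤ B := by
    intro t ht
    have habs : ∀ j, |f t j| ≤ Real.sqrt q0 := by
      intro j
      apply Real.abs_le_sqrt
      have h1 : f t j * f t j ≤ e t :=
        Finset.single_le_sum (fun i _ => mul_self_nonneg (f t i)) (Finset.mem_univ j)
      rw [heconst t ht, he0] at h1
      rw [sq]; exact h1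
    have h2 : ‖f t‖ ≤ Real.sqrt q0 :=
      (pi_norm_le_iff_of_nonneg (Real.sqrt_nonneg _)).2 fun j => by
        rw [Real.norm_eq_abs]; exact habs j
    rw [hBdef]; linarith
  have hfix : ∀ t ∈ Icc (0:ℝ) T, G (f t) = F (f t) := by
    intro t ht
    have h1 : radScale B (f t) = 1 := by
      unfold radScale; rw [if_pos (hball t ht)]
    simp only [hG, hφ, h1, one_smul]
  refine ⟨f, ?_, hf0⟩
  intro j t ht
  have h1 := hcomp t ht j
  rw [hfix t ht] at h1
  exact h1
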